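/- arXiv:math/0702730 — 5 statements merged into one kernel-verified Lean document; each statement's English description precedes it below -/
import Mathlib

section
/- For n ≥ 4, the Lie algebras L_n and Q_n (when n is even, n ≥ 6) are not isomorphic. -/
open Finset

/-- The `k`-th standard basis vector of `ℂⁿ` (zero if `k ≥ n`). -/
noncomputable def E (n k : ℕ) : Fin n → ℂ := fun t => if (t : ℕ) = k then 1 else 0

/-- The bilinear bracket on `ℂⁿ` determined by structure constants `s`, antisymmetrized:
`[e_i, e_j] = s i j - s j i`. -/
noncomputable def brkt (n : ℕ) (s : ℕ → ℕ → Fin n → ℂ) (x y : Fin n → ℂ) : Fin n → ℂ :=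
  ∑ i : Fin n, ∑ j : Fin n, (x i * y j) • (s (i : ℕ) (j : ℕ) - s (j : ℕ) (i : ℕ))

/-- Structure constants of the filiform Lie algebra `Lₙ`: `[X₀, Xᵢ] = X_{i+1}` for `1 ≤ i ≤ n-2`. -/
noncomputable def sL (n : ℕ) : ℕ → ℕ → Fin n → ℂ := fun i j =>
  if i = 0 ∧ 1 ≤ j ∧ j ≤ n - 2 then E n (j + 1) else 0

/-- Structure constants of `Q_n` (`n = 2m`): `[X₀,Xᵢ] = X_{i+1}` for `1 ≤ i ≤ n-3` and
`[Xⱼ, X_{n-j-1}] = (-1)^{j-1} X_{n-1}` for `1 ≤ j ≤ m-1`. -/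
noncomputable def sQ (n m : ℕ) : ℕ → ℕ → Fin n → ℂ := fun i j =>
  (if i = 0 ∧ 1 ≤ j ∧ j ≤ n - 3 then E n (j + 1) else 0) +
  (if 1 ≤ i ∧ i ≤ m - 1 ∧ j = n - i - 1 then ((-1 : ℂ) ^ (i - 1)) • E n (n - 1) else 0)


lemma brkt_E (n : ℕ) (s : ℕ → ℕ → Fin n → ℂ) (a b : ℕ) (ha : a < n) (hb : b < n) :
    brkt n s (E n a) (E n b) = s a b - s b a := by
  unfold brkt
  rw [Fintype.sum_eq_single (⟨a, ha⟩ : Fin n)]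
  · rw [Fintype.sum_eq_single (⟨b, hb⟩ : Fin n)]
    · simp [E]
    · intro j hj
      have : (j : ℕ) ≠ b := fun h => hj (Fin.ext h)
      simp [E, this]
  · intro i hi
    have : (i : ℕ) ≠ a := fun h => hi (Fin.ext h)
    apply Finset.sum_eq_zero
    intro j _
    simp [E, this]

lemma sL_apply_zero (n : ℕ) (i j : ℕ) (t : Fin n) (ht : (t : ℕ) = 0) : sL n i j t = 0 := by
  unfold sL E
  split_ifs with h
  · simp only
    rw [if_neg (by omega)]
  · rfl

lemma brkt_sL_zero (n : ℕ) (x y : Fin n → ℂ) (t : Fin n) (ht : (t : ℕ) = 0) :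
    brkt n (sL n) x y t = 0 := by
  unfold brkt
  rw [Finset.sum_apply]
  apply Finset.sum_eq_zero
  intro i _
  rw [Finset.sum_apply]
  apply Finset.sum_eq_zero
  intro j _
  simp [sL_apply_zero n _ _ t ht]

lemma brkt_sL_eq_zero (n : ℕ) (x y : Fin n → ℂ)
    (hx : ∀ i : Fin n, (i : ℕ) = 0 → x i = 0) (hy : ∀ i : Fin n, (i : ℕ) = 0 → y i = 0) :
    brkt n (sL n) x y = 0 := by
  unfold brkt
  apply Finset.sum_eq_zero
  intro i _
  apply Finset.sum_eq_zero
  intro j _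
  by_cases hi : (i : ℕ) = 0
  · simp [hx i hi]
  · by_cases hj : (j : ℕ) = 0
    · simp [hy j hj]
    · have h1 : sL n i j = 0 := by unfold sL; rw [if_neg (by omega)]
      have h2 : sL n j i = 0 := by unfold sL; rw [if_neg (by omega)]
      simp [h1, h2]

/-- for even `n = 2m ≥ 6`, the Lie algebras `Lₙ` and `Q_n` are not isomorphic. -/
theorem stmt_4 (n m : ℕ) (hm : 3 ≤ m) (hn : n = 2 * m) :
    ¬ ∃ e : (Fin n → ℂ) ≃ₗ[ℂ] (Fin n → ℂ),
        ∀ x y, e (brkt n (sL n) x y) = brkt n (sQ n m) (e x) (e y) := by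
  rintro ⟨e, he⟩
  have hn6 : 6 ≤ n := by omega
  have h01 : brkt n (sQ n m) (E n 0) (E n 1) = E n 2 := by
    rw [brkt_E n _ 0 1 (by omega) (by omega)]
    unfold sQ
    rw [if_pos (by omega), if_neg (by omega), if_neg (by omega), if_neg (by omega)]
    simp
  have h0n4 : brkt n (sQ n m) (E n 0) (E n (n - 4)) = E n (n - 3) := by
    rw [brkt_E n _ 0 (n - 4) (by omega) (by omega)]
    unfold sQ
    rw [if_pos (by omega), if_neg (by omega), if_neg (by omega), if_neg (by omega)]
    have : n - 4 + 1 = n - 3 := by omega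
    simp [this]
  have h2n3 : brkt n (sQ n m) (E n 2) (E n (n - 3)) = -E n (n - 1) := by
    rw [brkt_E n _ 2 (n - 3) (by omega) (by omega)]
    unfold sQ
    rw [if_neg (by omega), if_pos (by omega), if_neg (by omega), if_neg (by omega)]
    simp
  set x := e.symm (E n 0)
  set y := e.symm (E n 1)
  set z := e.symm (E n (n - 4))
  have hxy : e (brkt n (sL n) x y) = E n 2 := by
    rw [he]; simp only [x, y, LinearEquiv.apply_symm_apply]; exact h01
  have hxz : e (brkt n (sL n) x z) = E n (n - 3) := by
    rw [he]; simp only [x, z, LinearEquiv.apply_symm_apply]; exact h0n4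
  have hinner : brkt n (sL n) (brkt n (sL n) x y) (brkt n (sL n) x z) = 0 := by
    apply brkt_sL_eq_zero
    · intro i hi; exact brkt_sL_zero n _ _ i hi
    · intro i hi; exact brkt_sL_zero n _ _ i hi
  have hfinal : (0 : Fin n → ℂ) = -E n (n - 1) := by
    calc (0 : Fin n → ℂ) = e 0 := (map_zero e).symm
    _ = e (brkt n (sL n) (brkt n (sL n) x y) (brkt n (sL n) x z)) := by rw [hinner]
    _ = brkt n (sQ n m) (e (brkt n (sL n) x y)) (e (brkt n (sL n) x z)) := he _ _
    _ = brkt n (sQ n m) (E n 2) (E n (n - 3)) := by rw [hxy, hxz]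
    _ = -E n (n - 1) := h2n3
  have := congrFun hfinal ⟨n - 1, by omega⟩
  simp [E] at this
end

section
/- On the Lie algebra L_n (n ≥ 3), for any scalars λ_0, λ_1 ∈ ℂ, the linear map f defined on the basis by f(X_0) = λ_0 X_0, f(X_i) = ((i-1)λ_0 + λ_1) X_i for 1 ≤ i ≤ n-1 is a derivation. Consequently L_n admits a 2-dimensional abelian subalgebra of diagonal derivations, so rank(L_n) ≥ 2. -/
open Finset

/-- The diagonal map `f(X₀) = λ₀X₀`, `f(Xᵢ) = ((i-1)λ₀ + λ₁)Xᵢ` for `1 ≤ i ≤ n-1`. -/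
noncomputable def dL (n : ℕ) (l0 l1 : ℂ) (x : Fin n → ℂ) : Fin n → ℂ := fun t =>
  (if (t : ℕ) = 0 then l0 else (((t : ℕ) - 1 : ℕ) : ℂ) * l0 + l1) * x t

lemma dL_key (n : ℕ) (l0 l1 : ℂ) (i j t : Fin n) :
    (if (t : ℕ) = 0 then l0 else (((t : ℕ) - 1 : ℕ) : ℂ) * l0 + l1) *
      (sL n i j t - sL n j i t)
    = ((if (i : ℕ) = 0 then l0 else (((i : ℕ) - 1 : ℕ) : ℂ) * l0 + l1)
        + (if (j : ℕ) = 0 then l0 else (((j : ℕ) - 1 : ℕ) : ℂ) * l0 + l1)) *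
      (sL n i j t - sL n j i t) := by
  unfold sL E
  by_cases hij : (i : ℕ) = 0 ∧ 1 ≤ (j : ℕ) ∧ (j : ℕ) ≤ n - 2
  · have hji : ¬((j : ℕ) = 0 ∧ 1 ≤ (i : ℕ) ∧ (i : ℕ) ≤ n - 2) := by omega
    simp only [if_pos hij, if_neg hji, Pi.zero_apply, sub_zero]
    by_cases ht : (t : ℕ) = (j : ℕ) + 1
    · have ht0 : ¬ (t : ℕ) = 0 := by omega
      have hj0 : ¬ (j : ℕ) = 0 := by omega
      simp only [if_pos ht, if_neg ht0, if_pos hij.1, if_neg hj0, mul_one]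
      have h1 : ((t : ℕ) - 1 : ℕ) = (j : ℕ) := by omega
      have h2 : ((j : ℕ) : ℂ) = (((j : ℕ) - 1 : ℕ) : ℂ) + 1 := by
        have : (j : ℕ) = ((j : ℕ) - 1) + 1 := by omega
        rw [this]; push_cast; ring
      rw [h1, h2]; ring
    · simp [if_neg ht]
  · by_cases hji : (j : ℕ) = 0 ∧ 1 ≤ (i : ℕ) ∧ (i : ℕ) ≤ n - 2
    · simp only [if_neg hij, if_pos hji, Pi.zero_apply, zero_sub]
      by_cases ht : (t : ℕ) = (i : ℕ) + 1
      · have ht0 : ¬ (t : ℕ) = 0 := by omega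
        have hi0 : ¬ (i : ℕ) = 0 := by omega
        simp only [if_pos ht, if_neg ht0, if_pos hji.1, if_neg hi0]
        have h1 : ((t : ℕ) - 1 : ℕ) = (i : ℕ) := by omega
        have h2 : ((i : ℕ) : ℂ) = (((i : ℕ) - 1 : ℕ) : ℂ) + 1 := by
          have : (i : ℕ) = ((i : ℕ) - 1) + 1 := by omega
          rw [this]; push_cast; ring
        rw [h1, h2]; ring
      · simp [if_neg ht]
    · simp [if_neg hij, if_neg hji]

/-- on `Lₙ` (`n ≥ 3`), for all `λ₀, λ₁ ∈ ℂ` the diagonal map `dL n λ₀ λ₁` is a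
derivation; moreover the derivations for `(λ₀,λ₁) = (1,0)` and `(0,1)` commute and are linearly
independent, giving a 2-dimensional abelian algebra of diagonal derivations, so `rank Lₙ ≥ 2`. -/
theorem stmt_5 (n : ℕ) (hn : 3 ≤ n) :
    (∀ l0 l1 : ℂ, ∀ x y : Fin n → ℂ,
        dL n l0 l1 (brkt n (sL n) x y)
          = brkt n (sL n) (dL n l0 l1 x) y + brkt n (sL n) x (dL n l0 l1 y)) ∧
    (dL n 1 0 ∘ dL n 0 1 = dL n 0 1 ∘ dL n 1 0) ∧
    LinearIndependent ℂ ![dL n 1 0, dL n 0 1] := by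
  refine ⟨?_, ?_, ?_⟩
  · intro l0 l1 x y
    funext t
    simp only [brkt, dL, Finset.sum_apply, Pi.smul_apply, Pi.sub_apply, smul_eq_mul,
      Pi.add_apply, Finset.mul_sum, ← Finset.sum_add_distrib]
    refine Finset.sum_congr rfl fun i _ => Finset.sum_congr rfl fun j _ => ?_
    have h := dL_key n l0 l1 i j t
    linear_combination (x i * y j) * h
  · funext x t
    simp only [Function.comp_apply, dL]
    ring
  · rw [LinearIndependent.pair_iff]
    intro s t h
    have h0 := congrFun (congrFun h (E n 0)) ⟨0, by omega⟩
    have h1 := congrFun (congrFun h (E n 1)) ⟨1, by omega⟩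
    simp [dL, E] at h0 h1
    exact ⟨h0, h1⟩
end

section
/- On the Lie algebra Q_n (n = 2m, m ≥ 3), for any λ_0, λ_1 ∈ ℂ, the linear map f defined by f(X_0) = λ_0 X_0, f(X_i) = ((i-1)λ_0 + λ_1) X_i for 1 ≤ i ≤ n-2, and f(X_{n-1}) = ((n-3)λ_0 + 2λ_1) X_{n-1} is a derivation of Q_n. -/
open Finset

/-- The diagonal map `f(X₀)=λ₀X₀`, `f(Xᵢ)=((i-1)λ₀+λ₁)Xᵢ` for `1 ≤ i ≤ n-2`,
`f(X_{n-1}) = ((n-3)λ₀ + 2λ₁) X_{n-1}`. -/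
noncomputable def dQ (n : ℕ) (l0 l1 : ℂ) (x : Fin n → ℂ) : Fin n → ℂ := fun t =>
  (if (t : ℕ) = 0 then l0
   else if (t : ℕ) = n - 1 then ((n - 3 : ℕ) : ℂ) * l0 + 2 * l1
   else (((t : ℕ) - 1 : ℕ) : ℂ) * l0 + l1) * x t

/-- The diagonal coefficient of `dQ`. -/
noncomputable def cQ (n : ℕ) (l0 l1 : ℂ) (k : ℕ) : ℂ :=
  if k = 0 then l0
  else if k = n - 1 then ((n - 3 : ℕ) : ℂ) * l0 + 2 * l1
  else ((k - 1 : ℕ) : ℂ) * l0 + l1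

lemma keyA (n : ℕ) (l0 l1 : ℂ) (j : ℕ) (h6 : 6 ≤ n) (h1 : 1 ≤ j) (h2 : j ≤ n - 3) :
    cQ n l0 l1 (j + 1) = cQ n l0 l1 0 + cQ n l0 l1 j := by
  have e1 : j ≠ 0 := by omega
  have e2 : j ≠ n - 1 := by omega
  have e3 : j + 1 ≠ 0 := by omega
  have e4 : j + 1 ≠ n - 1 := by omega
  simp only [cQ, if_neg e1, if_neg e2, if_neg e3, if_neg e4, eq_self_iff_true, if_true,
    Nat.add_sub_cancel]
  have h : ((j : ℕ) : ℂ) = ((j - 1 : ℕ) : ℂ) + 1 := by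
    rw [Nat.cast_sub (by omega)]; push_cast; ring
  rw [h]; ring

lemma keyB (n : ℕ) (l0 l1 : ℂ) (i j : ℕ) (h6 : 6 ≤ n) (h1 : 1 ≤ i) (h2 : i < j)
    (h3 : i + j + 1 = n) : cQ n l0 l1 (n - 1) = cQ n l0 l1 i + cQ n l0 l1 j := by
  have e1 : i ≠ 0 := by omega
  have e2 : i ≠ n - 1 := by omega
  have e3 : j ≠ 0 := by omega
  have e4 : j ≠ n - 1 := by omega
  have e5 : n - 1 ≠ 0 := by omega
  simp only [cQ, if_neg e1, if_neg e2, if_neg e3, if_neg e4, if_neg e5, eq_self_iff_true,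
    if_true]
  have h : (n - 3 : ℕ) = (i - 1) + (j - 1) := by omega
  rw [h]; push_cast; ring

lemma key (n m : ℕ) (hm : 3 ≤ m) (hn : n = 2 * m) (l0 l1 : ℂ) (i j t : Fin n) :
    cQ n l0 l1 t * (sQ n m i j t - sQ n m j i t)
      = (cQ n l0 l1 i + cQ n l0 l1 j) * (sQ n m i j t - sQ n m j i t) := by
  have hi := i.isLt; have hj := j.isLt; have ht := t.isLt
  have h6 : 6 ≤ n := by omega
  simp only [sQ, Pi.add_apply]
  by_cases hA : (i : ℕ) = 0 ∧ 1 ≤ (j : ℕ) ∧ (j : ℕ) ≤ n - 3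
  · rw [if_pos hA, if_neg (by omega), if_neg (by omega), if_neg (by omega)]
    simp only [E, Pi.zero_apply]
    by_cases htj : (t : ℕ) = (j : ℕ) + 1
    · rw [if_pos htj, htj, hA.1, keyA n l0 l1 j h6 hA.2.1 hA.2.2]
      try ring
    · rw [if_neg htj]; ring
  · by_cases hA' : (j : ℕ) = 0 ∧ 1 ≤ (i : ℕ) ∧ (i : ℕ) ≤ n - 3
    · rw [if_pos hA', if_neg (by omega), if_neg (by omega), if_neg (by omega)]
      simp only [E, Pi.zero_apply]
      by_cases hti : (t : ℕ) = (i : ℕ) + 1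
      · rw [if_pos hti, hti, hA'.1, keyA n l0 l1 i h6 hA'.2.1 hA'.2.2]
        try ring
      · rw [if_neg hti]; ring
    · by_cases hB : 1 ≤ (i : ℕ) ∧ (i : ℕ) ≤ m - 1 ∧ (j : ℕ) = n - (i : ℕ) - 1
      · rw [if_pos hB, if_neg (by omega), if_neg (by omega), if_neg (by omega)]
        simp only [E, Pi.zero_apply, Pi.smul_apply, smul_eq_mul]
        by_cases htn : (t : ℕ) = n - 1
        · rw [if_pos htn, htn, keyB n l0 l1 i j h6 hB.1 (by omega) (by omega)]
          try ring
        · rw [if_neg htn]; ring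
      · by_cases hB' : 1 ≤ (j : ℕ) ∧ (j : ℕ) ≤ m - 1 ∧ (i : ℕ) = n - (j : ℕ) - 1
        · rw [if_pos hB', if_neg (by omega), if_neg (by omega), if_neg (by omega)]
          simp only [E, Pi.zero_apply, Pi.smul_apply, smul_eq_mul]
          by_cases htn : (t : ℕ) = n - 1
          · rw [if_pos htn, htn, keyB n l0 l1 j i h6 hB'.1 (by omega) (by omega)]
            try ring
          · rw [if_neg htn]; ring
        · rw [if_neg hA, if_neg hA', if_neg hB, if_neg hB']; ring

/-- on `Q_n` (`n = 2m`, `m ≥ 3`), the map `dQ n λ₀ λ₁` is a derivation. -/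
theorem stmt_6 (n m : ℕ) (hm : 3 ≤ m) (hn : n = 2 * m) (l0 l1 : ℂ) :
    ∀ x y : Fin n → ℂ,
      dQ n l0 l1 (brkt n (sQ n m) x y)
        = brkt n (sQ n m) (dQ n l0 l1 x) y + brkt n (sQ n m) x (dQ n l0 l1 y) := by
  intro x y
  have hd : ∀ (z : Fin n → ℂ) (u : Fin n), dQ n l0 l1 z u = cQ n l0 l1 u * z u :=
    fun z u => rfl
  funext t
  simp only [Pi.add_apply, hd, brkt, Finset.sum_apply, Pi.smul_apply, Pi.sub_apply,
    smul_eq_mul, Finset.mul_sum, ← Finset.sum_add_distrib]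
  refine Finset.sum_congr rfl fun i _ => Finset.sum_congr rfl fun j _ => ?_
  have hk := key n m hm hn l0 l1 i j t
  linear_combination (x i * y j) * hk
end

section
/- For n ≥ 5 and odd r with 3 ≤ r ≤ 2⌊(n-1)/2⌋ - 1, the bracket on basis {X_0,...,X_{n-1}} given by [X_0, X_i] = X_{i+1} for i = 1,...,n-3 and [X_i, X_{r-i}] = (-1)^{i-1} X_{n-1} for i = 1,...,(r-1)/2 satisfies the Jacobi identity, so defines a Lie algebra L_{n,r}. -/
open Finset

/-- Structure constants of `L_{n,r}`: `[X₀, Xᵢ] = X_{i+1}` for `1 ≤ i ≤ n-3` and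
`[Xᵢ, X_{r-i}] = (-1)^{i-1} X_{n-1}` for `1 ≤ i ≤ (r-1)/2`. -/
noncomputable def sLnr (n r : ℕ) : ℕ → ℕ → Fin n → ℂ := fun i j =>
  (if i = 0 ∧ 1 ≤ j ∧ j ≤ n - 3 then E n (j + 1) else 0) +
  (if 1 ≤ i ∧ i ≤ (r - 1) / 2 ∧ j = r - i then ((-1 : ℂ) ^ (i - 1)) • E n (n - 1) else 0)

noncomputable def cc (n r : ℕ) : ℕ → ℕ → Fin n → ℂ := fun p q => sLnr n r p q - sLnr n r q p

lemma Esum (n m : ℕ) (hm : m < n) (w : ℕ → Fin n → ℂ) :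
    ∑ a : Fin n, E n m a • w (a : ℕ) = w m := by
  rw [Fintype.sum_eq_single (⟨m, hm⟩ : Fin n)]
  · simp [E]
  · intro a ha
    have : (a : ℕ) ≠ m := fun h => ha (Fin.ext h)
    simp [E, this]

lemma centre (n r : ℕ) (hn : 5 ≤ n) (hr2 : r ≤ n - 2) (i : ℕ) : cc n r i (n - 1) = 0 := by
  have h1 : ¬(i = 0 ∧ 1 ≤ n - 1 ∧ n - 1 ≤ n - 3) := by omega
  have h2 : ¬(1 ≤ i ∧ i ≤ (r - 1) / 2 ∧ n - 1 = r - i) := by omega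
  have h3 : ¬(n - 1 = 0 ∧ 1 ≤ i ∧ i ≤ n - 3) := by omega
  have h4 : ¬(1 ≤ n - 1 ∧ n - 1 ≤ (r - 1) / 2 ∧ i = r - (n - 1)) := by omega
  simp only [cc, sLnr, if_neg h1, if_neg h2, if_neg h3, if_neg h4, add_zero, sub_self]

lemma Ssum (n r : ℕ) (hn : 5 ≤ n) (hr2 : r ≤ n - 2) (i p q : ℕ) :
    ∑ a : Fin n, (sLnr n r p q) a • cc n r i (a : ℕ) =
      if p = 0 ∧ 1 ≤ q ∧ q ≤ n - 3 then cc n r i (q + 1) else 0 := by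
  have hsplit : ∀ a : Fin n, (sLnr n r p q) a • cc n r i (a : ℕ) =
      ((if p = 0 ∧ 1 ≤ q ∧ q ≤ n - 3 then E n (q + 1) else 0) a) • cc n r i (a : ℕ) +
      ((if 1 ≤ p ∧ p ≤ (r - 1) / 2 ∧ q = r - p then ((-1 : ℂ) ^ (p - 1)) • E n (n - 1) else 0) a)
        • cc n r i (a : ℕ) := by
    intro a
    simp [sLnr, add_smul]
  rw [Finset.sum_congr rfl fun a _ => hsplit a, Finset.sum_add_distrib]
  have hB : (∑ a : Fin n,
      ((if 1 ≤ p ∧ p ≤ (r - 1) / 2 ∧ q = r - p then ((-1 : ℂ) ^ (p - 1)) • E n (n - 1) else 0) a)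
        • cc n r i (a : ℕ)) = 0 := by
    by_cases hc : 1 ≤ p ∧ p ≤ (r - 1) / 2 ∧ q = r - p
    · simp only [if_pos hc, Pi.smul_apply, smul_eq_mul, mul_smul]
      rw [← Finset.smul_sum, Esum n (n - 1) (by omega), centre n r hn hr2 i, smul_zero]
    · simp [if_neg hc]
  rw [hB, add_zero]
  by_cases hc : p = 0 ∧ 1 ≤ q ∧ q ≤ n - 3
  · simp only [if_pos hc]
    exact Esum n (q + 1) (by omega) _
  · simp [if_neg hc]

lemma Dval (n r : ℕ) (hn : 5 ≤ n) (hr2 : r ≤ n - 2) (i j k : ℕ) :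
    ∑ a : Fin n, (cc n r j k) a • cc n r i (a : ℕ) =
      (if j = 0 ∧ 1 ≤ k ∧ k ≤ n - 3 then cc n r i (k + 1) else 0) -
      (if k = 0 ∧ 1 ≤ j ∧ j ≤ n - 3 then cc n r i (j + 1) else 0) := by
  have : ∀ a : Fin n, (cc n r j k) a • cc n r i (a : ℕ) =
      (sLnr n r j k) a • cc n r i (a : ℕ) - (sLnr n r k j) a • cc n r i (a : ℕ) := by
    intro a; simp [cc, sub_smul]
  rw [Finset.sum_congr rfl fun a _ => this a, Finset.sum_sub_distrib,
    Ssum n r hn hr2, Ssum n r hn hr2]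

lemma powpar (a b : ℕ) (h : a % 2 = b % 2) : (-1 : ℂ) ^ a = (-1 : ℂ) ^ b := by
  rw [← Nat.div_add_mod a 2, ← Nat.div_add_mod b 2, pow_add, pow_add, pow_mul, pow_mul]
  norm_num [h]

lemma cval (n r : ℕ) (p q : ℕ) (hp : 1 ≤ p) (hq : 1 ≤ q) :
    cc n r p q =
      ((if 1 ≤ p ∧ p ≤ (r - 1) / 2 ∧ q = r - p then (-1 : ℂ) ^ (p - 1) else 0) -
       (if 1 ≤ q ∧ q ≤ (r - 1) / 2 ∧ p = r - q then (-1 : ℂ) ^ (q - 1) else 0)) • E n (n - 1) := by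
  have h1 : ¬(p = 0 ∧ 1 ≤ q ∧ q ≤ n - 3) := by omega
  have h2 : ¬(q = 0 ∧ 1 ≤ p ∧ p ≤ n - 3) := by omega
  simp only [cc, sLnr, if_neg h1, if_neg h2, zero_add, sub_smul, ite_smul, zero_smul, smul_smul]

lemma K2 (n r : ℕ) (hn : 5 ≤ n) (hr2 : r ≤ n - 2) (j k : ℕ) (hk : n - 3 < k) :
    cc n r j (k + 1) = 0 := by
  have h1 : ¬(j = 0 ∧ 1 ≤ k + 1 ∧ k + 1 ≤ n - 3) := by omega
  have h2 : ¬(1 ≤ j ∧ j ≤ (r - 1) / 2 ∧ k + 1 = r - j) := by omega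
  have h3 : ¬(k + 1 = 0 ∧ 1 ≤ j ∧ j ≤ n - 3) := by omega
  have h4 : ¬(1 ≤ k + 1 ∧ k + 1 ≤ (r - 1) / 2 ∧ j = r - (k + 1)) := by omega
  simp only [cc, sLnr, if_neg h1, if_neg h2, if_neg h3, if_neg h4, add_zero, sub_self]

lemma K1 (n r : ℕ) (hr : Odd r) (hr3 : 3 ≤ r) (j k : ℕ) (hj : 1 ≤ j) (hk : 1 ≤ k) :
    cc n r j (k + 1) = cc n r k (j + 1) := by
  obtain ⟨m, hm⟩ := hr
  have hh : (r - 1) / 2 = m := by omega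
  rw [cval n r j (k+1) hj (by omega), cval n r k (j+1) hk (by omega)]
  congr 1
  rw [hh]
  by_cases hs : j + k + 1 = r
  · by_cases hjm : j ≤ m
    · rcases Nat.lt_or_ge j m with hlt | hge
      · -- j < m : k = 2m - j > m
        rw [if_pos (by omega : 1 ≤ j ∧ j ≤ m ∧ k + 1 = r - j),
            if_neg (by omega : ¬(1 ≤ k + 1 ∧ k + 1 ≤ m ∧ j = r - (k + 1))),
            if_neg (by omega : ¬(1 ≤ k ∧ k ≤ m ∧ j + 1 = r - k)),
            if_pos (by omega : 1 ≤ j + 1 ∧ j + 1 ≤ m ∧ k = r - (j + 1))]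
        rw [sub_zero, zero_sub]
        rw [powpar (j - 1) (j + 1) (by omega), pow_succ]
        simp [pow_succ]
      · -- j = m, k = m
        have hje : j = m := by omega
        have hke : k = m := by omega
        rw [if_pos (by omega : 1 ≤ j ∧ j ≤ m ∧ k + 1 = r - j),
            if_neg (by omega : ¬(1 ≤ k + 1 ∧ k + 1 ≤ m ∧ j = r - (k + 1))),
            if_pos (by omega : 1 ≤ k ∧ k ≤ m ∧ j + 1 = r - k),
            if_neg (by omega : ¬(1 ≤ j + 1 ∧ j + 1 ≤ m ∧ k = r - (j + 1)))]
        rw [hje, hke]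
    · -- j > m, k ≤ m - 1
      rw [if_neg (by omega : ¬(1 ≤ j ∧ j ≤ m ∧ k + 1 = r - j)),
          if_pos (by omega : 1 ≤ k + 1 ∧ k + 1 ≤ m ∧ j = r - (k + 1)),
          if_pos (by omega : 1 ≤ k ∧ k ≤ m ∧ j + 1 = r - k),
          if_neg (by omega : ¬(1 ≤ j + 1 ∧ j + 1 ≤ m ∧ k = r - (j + 1)))]
      rw [zero_sub, sub_zero, Nat.add_sub_cancel]
      have hk1 : ((-1:ℂ)) ^ k = (-1) ^ (k - 1) * (-1) := by
        rw [← pow_succ]; exact powpar k (k - 1 + 1) (by omega)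
      rw [hk1]; ring
  · rw [if_neg (by omega : ¬(1 ≤ j ∧ j ≤ m ∧ k + 1 = r - j)),
        if_neg (by omega : ¬(1 ≤ k + 1 ∧ k + 1 ≤ m ∧ j = r - (k + 1))),
        if_neg (by omega : ¬(1 ≤ k ∧ k ≤ m ∧ j + 1 = r - k)),
        if_neg (by omega : ¬(1 ≤ j + 1 ∧ j + 1 ≤ m ∧ k = r - (j + 1)))]

lemma Jlem (n r : ℕ) (hn : 5 ≤ n) (hr : Odd r) (hr3 : 3 ≤ r) (hr2 : r ≤ n - 2) (i j k : ℕ) :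
    (∑ a : Fin n, cc n r j k a • cc n r i (a : ℕ)) +
    (∑ a : Fin n, cc n r k i a • cc n r j (a : ℕ)) +
    (∑ a : Fin n, cc n r i j a • cc n r k (a : ℕ)) = 0 := by
  rw [Dval n r hn hr2, Dval n r hn hr2, Dval n r hn hr2]
  rcases Nat.eq_zero_or_pos i with hi | hi
  · subst hi
    rcases Nat.eq_zero_or_pos j with hj | hj
    · subst hj
      rcases Nat.eq_zero_or_pos k with hk | hk
      · subst hk
        norm_num
      · -- i = j = 0, k ≥ 1
        abel
    · rcases Nat.eq_zero_or_pos k with hk | hk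
      · subst hk
        -- i = k = 0, j ≥ 1
        abel
      · -- i = 0, j ≥ 1, k ≥ 1
        rw [if_neg (by omega : ¬(j = 0 ∧ 1 ≤ k ∧ k ≤ n - 3)),
            if_neg (by omega : ¬(k = 0 ∧ 1 ≤ j ∧ j ≤ n - 3)),
            if_neg (by omega : ¬(k = 0 ∧ 1 ≤ 0 ∧ (0:ℕ) ≤ n - 3)),
            if_neg (by omega : ¬(j = 0 ∧ 1 ≤ 0 ∧ (0:ℕ) ≤ n - 3))]
        by_cases h4 : k ≤ n - 3 <;> by_cases h5 : j ≤ n - 3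
        · rw [if_pos ⟨rfl, hk, h4⟩, if_pos ⟨rfl, hj, h5⟩, K1 n r hr hr3 j k hj hk]
          abel
        · rw [if_pos ⟨rfl, hk, h4⟩, if_neg (by omega : ¬((0:ℕ) = 0 ∧ 1 ≤ j ∧ j ≤ n - 3)),
              K1 n r hr hr3 j k hj hk, K2 n r hn hr2 k j (by omega)]
          abel
        · rw [if_neg (by omega : ¬((0:ℕ) = 0 ∧ 1 ≤ k ∧ k ≤ n - 3)), if_pos ⟨rfl, hj, h5⟩,
              ← K1 n r hr hr3 j k hj hk, K2 n r hn hr2 j k (by omega)]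
          abel
        · rw [if_neg (by omega : ¬((0:ℕ) = 0 ∧ 1 ≤ k ∧ k ≤ n - 3)),
              if_neg (by omega : ¬((0:ℕ) = 0 ∧ 1 ≤ j ∧ j ≤ n - 3))]
          abel
  · rcases Nat.eq_zero_or_pos j with hj | hj
    · subst hj
      rcases Nat.eq_zero_or_pos k with hk | hk
      · subst hk
        -- j = k = 0, i ≥ 1
        abel
      · -- j = 0, i ≥ 1, k ≥ 1
        rw [if_neg (by omega : ¬(k = 0 ∧ 1 ≤ 0 ∧ (0:ℕ) ≤ n - 3)),
            if_neg (by omega : ¬(k = 0 ∧ 1 ≤ i ∧ i ≤ n - 3)),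
            if_neg (by omega : ¬(i = 0 ∧ 1 ≤ k ∧ k ≤ n - 3)),
            if_neg (by omega : ¬(i = 0 ∧ 1 ≤ 0 ∧ (0:ℕ) ≤ n - 3))]
        by_cases h4 : k ≤ n - 3 <;> by_cases h5 : i ≤ n - 3
        · rw [if_pos ⟨rfl, hk, h4⟩, if_pos ⟨rfl, hi, h5⟩, K1 n r hr hr3 i k hi hk]
          abel
        · rw [if_pos ⟨rfl, hk, h4⟩, if_neg (by omega : ¬((0:ℕ) = 0 ∧ 1 ≤ i ∧ i ≤ n - 3)),
              K1 n r hr hr3 i k hi hk, K2 n r hn hr2 k i (by omega)]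
          abel
        · rw [if_neg (by omega : ¬((0:ℕ) = 0 ∧ 1 ≤ k ∧ k ≤ n - 3)), if_pos ⟨rfl, hi, h5⟩,
              ← K1 n r hr hr3 i k hi hk, K2 n r hn hr2 i k (by omega)]
          abel
        · rw [if_neg (by omega : ¬((0:ℕ) = 0 ∧ 1 ≤ k ∧ k ≤ n - 3)),
              if_neg (by omega : ¬((0:ℕ) = 0 ∧ 1 ≤ i ∧ i ≤ n - 3))]
          abel
    · rcases Nat.eq_zero_or_pos k with hk | hk
      · subst hk
        -- k = 0, i ≥ 1, j ≥ 1
        rw [if_neg (by omega : ¬(j = 0 ∧ 1 ≤ 0 ∧ (0:ℕ) ≤ n - 3)),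
            if_neg (by omega : ¬(i = 0 ∧ 1 ≤ 0 ∧ (0:ℕ) ≤ n - 3)),
            if_neg (by omega : ¬(i = 0 ∧ 1 ≤ j ∧ j ≤ n - 3)),
            if_neg (by omega : ¬(j = 0 ∧ 1 ≤ i ∧ i ≤ n - 3))]
        by_cases h4 : j ≤ n - 3 <;> by_cases h5 : i ≤ n - 3
        · rw [if_pos (⟨rfl, hj, h4⟩ : (0:ℕ) = 0 ∧ 1 ≤ j ∧ j ≤ n - 3),
              if_pos (⟨rfl, hi, h5⟩ : (0:ℕ) = 0 ∧ 1 ≤ i ∧ i ≤ n - 3),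
              K1 n r hr hr3 j i hj hi]
          abel
        · rw [if_pos (⟨rfl, hj, h4⟩ : (0:ℕ) = 0 ∧ 1 ≤ j ∧ j ≤ n - 3),
              if_neg (by omega : ¬((0:ℕ) = 0 ∧ 1 ≤ i ∧ i ≤ n - 3)),
              K1 n r hr hr3 i j hi hj, K2 n r hn hr2 j i (by omega)]
          abel
        · rw [if_neg (by omega : ¬((0:ℕ) = 0 ∧ 1 ≤ j ∧ j ≤ n - 3)),
              if_pos (⟨rfl, hi, h5⟩ : (0:ℕ) = 0 ∧ 1 ≤ i ∧ i ≤ n - 3),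
              K1 n r hr hr3 j i hj hi, K2 n r hn hr2 i j (by omega)]
          abel
        · rw [if_neg (by omega : ¬((0:ℕ) = 0 ∧ 1 ≤ j ∧ j ≤ n - 3)),
              if_neg (by omega : ¬((0:ℕ) = 0 ∧ 1 ≤ i ∧ i ≤ n - 3))]
          abel
      · -- all ≥ 1
        rw [if_neg (by omega : ¬(j = 0 ∧ 1 ≤ k ∧ k ≤ n - 3)),
            if_neg (by omega : ¬(k = 0 ∧ 1 ≤ j ∧ j ≤ n - 3)),
            if_neg (by omega : ¬(k = 0 ∧ 1 ≤ i ∧ i ≤ n - 3)),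
            if_neg (by omega : ¬(i = 0 ∧ 1 ≤ k ∧ k ≤ n - 3)),
            if_neg (by omega : ¬(i = 0 ∧ 1 ≤ j ∧ j ≤ n - 3)),
            if_neg (by omega : ¬(j = 0 ∧ 1 ≤ i ∧ i ≤ n - 3))]
        abel
lemma cyc {n : ℕ} {M : Type*} [AddCommMonoid M] (F : Fin n → Fin n → Fin n → M) :
    (∑ i : Fin n, ∑ j : Fin n, ∑ k : Fin n, F i j k) =
      ∑ i : Fin n, ∑ j : Fin n, ∑ k : Fin n, F k i j := by
  rw [Finset.sum_comm]
  exact Finset.sum_congr rfl fun j _ => Finset.sum_comm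

lemma hgen (n r : ℕ) (x y z : Fin n → ℂ) :
    brkt n (sLnr n r) x (brkt n (sLnr n r) y z) =
      ∑ i : Fin n, ∑ j : Fin n, ∑ k : Fin n,
        (x i * (y j * z k)) • (∑ a : Fin n, cc n r (j : ℕ) (k : ℕ) a • cc n r (i : ℕ) (a : ℕ)) := by
  unfold brkt
  have hv : ∀ a : Fin n,
      (∑ p : Fin n, ∑ q : Fin n, (y p * z q) • (sLnr n r (p:ℕ) (q:ℕ) - sLnr n r (q:ℕ) (p:ℕ))) a =
        ∑ p : Fin n, ∑ q : Fin n, (y p * z q) * (cc n r (p:ℕ) (q:ℕ)) a := by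
    intro a
    simp [Finset.sum_apply, cc]
  calc
    ∑ i : Fin n, ∑ a : Fin n,
        (x i * (∑ p : Fin n, ∑ q : Fin n, (y p * z q) • (sLnr n r (p:ℕ) (q:ℕ) - sLnr n r (q:ℕ) (p:ℕ))) a)
          • (sLnr n r (i:ℕ) (a:ℕ) - sLnr n r (a:ℕ) (i:ℕ))
      = ∑ i : Fin n, ∑ a : Fin n, ∑ p : Fin n, ∑ q : Fin n,
          ((x i * (y p * z q)) * (cc n r (p:ℕ) (q:ℕ)) a) • cc n r (i:ℕ) (a:ℕ) := by
        refine Finset.sum_congr rfl fun i _ => Finset.sum_congr rfl fun a _ => ?_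
        rw [hv a, Finset.mul_sum]
        rw [show (sLnr n r (i:ℕ) (a:ℕ) - sLnr n r (a:ℕ) (i:ℕ)) = cc n r (i:ℕ) (a:ℕ) from rfl]
        rw [Finset.sum_smul]
        refine Finset.sum_congr rfl fun p _ => ?_
        rw [Finset.mul_sum, Finset.sum_smul]
        refine Finset.sum_congr rfl fun q _ => ?_
        ring_nf
    _ = ∑ i : Fin n, ∑ p : Fin n, ∑ q : Fin n, ∑ a : Fin n,
          ((x i * (y p * z q)) * (cc n r (p:ℕ) (q:ℕ)) a) • cc n r (i:ℕ) (a:ℕ) := by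
        refine Finset.sum_congr rfl fun i _ => ?_
        rw [Finset.sum_comm]
        exact Finset.sum_congr rfl fun p _ => Finset.sum_comm
    _ = ∑ i : Fin n, ∑ p : Fin n, ∑ q : Fin n,
          (x i * (y p * z q)) • (∑ a : Fin n, cc n r (p:ℕ) (q:ℕ) a • cc n r (i:ℕ) (a:ℕ)) := by
        refine Finset.sum_congr rfl fun i _ => Finset.sum_congr rfl fun p _ =>
          Finset.sum_congr rfl fun q _ => ?_
        rw [Finset.smul_sum]
        exact Finset.sum_congr rfl fun a _ => by rw [smul_smul]


/-- for `n ≥ 5` and odd `r` with `3 ≤ r ≤ 2⌊(n-1)/2⌋ - 1`, the bracket of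
`L_{n,r}` satisfies the Jacobi identity. -/
theorem stmt_8 (n r : ℕ) (hn : 5 ≤ n) (hr : Odd r) (hr3 : 3 ≤ r)
    (hrn : r ≤ 2 * ((n - 1) / 2) - 1) :
    ∀ x y z : Fin n → ℂ,
      brkt n (sLnr n r) x (brkt n (sLnr n r) y z) +
        brkt n (sLnr n r) y (brkt n (sLnr n r) z x) +
        brkt n (sLnr n r) z (brkt n (sLnr n r) x y) = 0 := by
  intro x y z
  have hr2 : r ≤ n - 2 := by omega
  rw [hgen n r x y z, hgen n r y z x, hgen n r z x y]
  have e2 : (∑ i : Fin n, ∑ j : Fin n, ∑ k : Fin n,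
        (y i * (z j * x k)) • (∑ a : Fin n, cc n r (j : ℕ) (k : ℕ) a • cc n r (i : ℕ) (a : ℕ)))
      = ∑ i : Fin n, ∑ j : Fin n, ∑ k : Fin n,
        (y j * (z k * x i)) • (∑ a : Fin n, cc n r (k : ℕ) (i : ℕ) a • cc n r (j : ℕ) (a : ℕ)) :=
    (cyc fun i j k => (y i * (z j * x k)) •
        (∑ a : Fin n, cc n r (j : ℕ) (k : ℕ) a • cc n r (i : ℕ) (a : ℕ))).trans
      (cyc fun i j k => (y k * (z i * x j)) •
        (∑ a : Fin n, cc n r (i : ℕ) (j : ℕ) a • cc n r (k : ℕ) (a : ℕ)))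
  have e3 : (∑ i : Fin n, ∑ j : Fin n, ∑ k : Fin n,
        (z i * (x j * y k)) • (∑ a : Fin n, cc n r (j : ℕ) (k : ℕ) a • cc n r (i : ℕ) (a : ℕ)))
      = ∑ i : Fin n, ∑ j : Fin n, ∑ k : Fin n,
        (z k * (x i * y j)) • (∑ a : Fin n, cc n r (i : ℕ) (j : ℕ) a • cc n r (k : ℕ) (a : ℕ)) :=
    cyc fun i j k => (z i * (x j * y k)) •
      (∑ a : Fin n, cc n r (j : ℕ) (k : ℕ) a • cc n r (i : ℕ) (a : ℕ))
  rw [e2, e3]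
  simp only [← Finset.sum_add_distrib]
  refine Finset.sum_eq_zero fun i _ => Finset.sum_eq_zero fun j _ => Finset.sum_eq_zero fun k _ => ?_
  rw [show y j * (z k * x i) = x i * (y j * z k) by ring,
      show z k * (x i * y j) = x i * (y j * z k) by ring,
      ← smul_add, ← smul_add, Jlem n r hn hr hr3 hr2 (i : ℕ) (j : ℕ) (k : ℕ), smul_zero]
end

section
/- The Lie algebra L_{n,r} (n ≥ 5, r odd, 3 ≤ r ≤ 2⌊(n-1)/2⌋-1) is nilpotent of nilindex exactly n-2, i.e. it is quasi-filiform. -/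
open Finset

/-- Lower central series: `lcs 0 = ⊤` corresponds to `g₁ = g`, and
`lcs (k+1) = [lcs k, g]` corresponds to `g_{k+2}`. -/
noncomputable def lcs (n : ℕ) (s : ℕ → ℕ → Fin n → ℂ) : ℕ → Submodule ℂ (Fin n → ℂ)
  | 0 => ⊤
  | k + 1 => Submodule.span ℂ {w | ∃ x ∈ lcs n s k, ∃ y, w = brkt n s x y}

lemma brkt_apply (n : ℕ) (s : ℕ → ℕ → Fin n → ℂ) (x y : Fin n → ℂ) (t : Fin n) :
    brkt n s x y t = ∑ i : Fin n, ∑ j : Fin n,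
      (x i * y j) * (s (i : ℕ) (j : ℕ) t - s (j : ℕ) (i : ℕ) t) := by
  simp [brkt, Finset.sum_apply, smul_eq_mul]

lemma sLnr_apply (n r i j : ℕ) (t : Fin n) :
    sLnr n r i j t =
      (if i = 0 ∧ 1 ≤ j ∧ j ≤ n - 3 ∧ (t : ℕ) = j + 1 then 1 else 0) +
      (if 1 ≤ i ∧ i ≤ (r - 1) / 2 ∧ j = r - i ∧ (t : ℕ) = n - 1 then (-1 : ℂ) ^ (i - 1) else 0) := by
  simp only [sLnr, Pi.add_apply]
  congr 1
  · split_ifs with h1 h2 h3 <;> simp_all [E]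
  · split_ifs with h1 h2 h3 <;> simp_all [E]

lemma brkt_EE (n : ℕ) (s : ℕ → ℕ → Fin n → ℂ) (i j : ℕ) (hi : i < n) (hj : j < n) :
    brkt n s (E n i) (E n j) = s i j - s j i := by
  unfold brkt
  rw [Finset.sum_eq_single (⟨i, hi⟩ : Fin n)]
  · rw [Finset.sum_eq_single (⟨j, hj⟩ : Fin n)]
    · simp [E]
    · intro b _ hb
      have hb' : (b : ℕ) ≠ j := fun h => hb (Fin.ext h)
      simp [E, hb']
    · intro h; exact absurd (Finset.mem_univ _) h
  · intro a _ ha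
    have ha' : (a : ℕ) ≠ i := fun h => ha (Fin.ext h)
    apply Finset.sum_eq_zero; intro b _
    simp [E, ha']
  · intro h; exact absurd (Finset.mem_univ _) h

noncomputable def W (n k : ℕ) : Submodule ℂ (Fin n → ℂ) where
  carrier := {x | ∀ t : Fin n, (t : ℕ) < k → (t : ℕ) < n - 1 → x t = 0}
  add_mem' := fun ha hb t h1 h2 => by simp [Pi.add_apply, ha t h1 h2, hb t h1 h2]
  zero_mem' := fun t _ _ => rfl
  smul_mem' := fun c a ha t h1 h2 => by simp [Pi.smul_apply, ha t h1 h2]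

lemma mem_W (n k : ℕ) (x : Fin n → ℂ) :
    x ∈ W n k ↔ ∀ t : Fin n, (t : ℕ) < k → (t : ℕ) < n - 1 → x t = 0 := Iff.rfl

lemma brkt_mem_W2 (n r : ℕ) (hn : 5 ≤ n) (x y : Fin n → ℂ) :
    brkt n (sLnr n r) x y ∈ W n 2 := by
  intro t ht1 ht2
  rw [brkt_apply]
  refine Finset.sum_eq_zero fun i _ => Finset.sum_eq_zero fun j _ => ?_
  rw [sLnr_apply, sLnr_apply]
  split_ifs <;> first | (exfalso; omega) | ring

lemma brkt_mem_W_succ (n r : ℕ) (hn : 5 ≤ n) (k : ℕ) (hk : 1 ≤ k) (x y : Fin n → ℂ)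
    (hx : x ∈ W n k) : brkt n (sLnr n r) x y ∈ W n (k + 1) := by
  intro t ht1 ht2
  rw [brkt_apply]
  refine Finset.sum_eq_zero fun i _ => ?_
  by_cases hi : (i : ℕ) < k ∧ (i : ℕ) < n - 1
  · refine Finset.sum_eq_zero fun j _ => ?_
    rw [hx i hi.1 hi.2]; ring
  · refine Finset.sum_eq_zero fun j _ => ?_
    rw [sLnr_apply, sLnr_apply]
    split_ifs <;> first | (exfalso; omega) | ring

lemma brkt_central (n r : ℕ) (hn : 5 ≤ n) (hrn : r ≤ n - 2) (x y : Fin n → ℂ)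
    (hx : ∀ t : Fin n, (t : ℕ) < n - 2 → x t = 0) : brkt n (sLnr n r) x y = 0 := by
  funext t
  rw [brkt_apply]
  simp only [Pi.zero_apply]
  refine Finset.sum_eq_zero fun i _ => ?_
  by_cases hi : (i : ℕ) < n - 2
  · refine Finset.sum_eq_zero fun j _ => ?_
    rw [hx i hi]; ring
  · refine Finset.sum_eq_zero fun j _ => ?_
    rw [sLnr_apply, sLnr_apply]
    split_ifs <;> first | (exfalso; omega) | ring

lemma sLnr_left_zero (n r k : ℕ) : sLnr n r k 0 = 0 := by
  funext t
  rw [sLnr_apply]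
  split_ifs <;> first | (exfalso; omega) | norm_num

lemma sLnr_zero_right (n r k : ℕ) (h1 : 1 ≤ k) (h2 : k ≤ n - 3) :
    sLnr n r 0 k = E n (k + 1) := by
  funext t
  rw [sLnr_apply]
  simp [E, h1, h2]

lemma E_mem_lcs (n r : ℕ) (hn : 5 ≤ n) :
    ∀ k, k ≤ n - 3 → E n (k + 1) ∈ lcs n (sLnr n r) k := by
  intro k
  induction k with
  | zero => intro _; exact Submodule.mem_top
  | succ k ih =>
    intro hk
    have hmem : brkt n (sLnr n r) (E n (k + 1)) (E n 0) ∈ lcs n (sLnr n r) (k + 1) := by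
      show brkt n (sLnr n r) (E n (k + 1)) (E n 0) ∈
        Submodule.span ℂ {w | ∃ x ∈ lcs n (sLnr n r) k, ∃ y, w = brkt n (sLnr n r) x y}
      exact Submodule.subset_span ⟨E n (k + 1), ih (by omega), E n 0, rfl⟩
    have hcomp : brkt n (sLnr n r) (E n (k + 1)) (E n 0) = -E n (k + 2) := by
      rw [brkt_EE n (sLnr n r) (k + 1) 0 (by omega) (by omega),
        sLnr_left_zero, sLnr_zero_right n r (k + 1) (by omega) (by omega)]
      simp
    rw [hcomp] at hmem
    simpa using neg_mem hmem

lemma lcs_le_W (n r : ℕ) (hn : 5 ≤ n) :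
    ∀ k, lcs n (sLnr n r) (k + 1) ≤ W n (k + 2) := by
  intro k
  induction k with
  | zero =>
    show Submodule.span ℂ {w | ∃ x ∈ lcs n (sLnr n r) 0, ∃ y, w = brkt n (sLnr n r) x y} ≤ W n 2
    rw [Submodule.span_le]
    rintro w ⟨x, -, y, rfl⟩
    exact brkt_mem_W2 n r hn x y
  | succ k ih =>
    show Submodule.span ℂ {w | ∃ x ∈ lcs n (sLnr n r) (k + 1), ∃ y, w = brkt n (sLnr n r) x y}
      ≤ W n (k + 3)
    rw [Submodule.span_le]
    rintro w ⟨x, hx, y, rfl⟩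
    exact brkt_mem_W_succ n r hn (k + 2) (by omega) x y (ih hx)


/-- `L_{n,r}` is nilpotent of nilindex exactly `n-2` (quasi-filiform):
`g_{n-2} = lcs (n-3) ≠ 0` and `g_{n-1} = lcs (n-2) = 0`. -/
theorem stmt_9 (n r : ℕ) (hn : 5 ≤ n) (hr : Odd r) (hr3 : 3 ≤ r)
    (hrn : r ≤ 2 * ((n - 1) / 2) - 1) :
    lcs n (sLnr n r) (n - 3) ≠ ⊥ ∧ lcs n (sLnr n r) (n - 2) = ⊥ := by
  have hrn2 : r ≤ n - 2 := by omega
  constructor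
  · intro hbot
    have hmem := E_mem_lcs n r hn (n - 3) le_rfl
    rw [hbot, Submodule.mem_bot] at hmem
    have h1 : E n (n - 3 + 1) ⟨n - 2, by omega⟩ = 1 := by
      simp [E]
      omega
    rw [hmem] at h1
    simp at h1
  · have e3 : n - 3 = (n - 4) + 1 := by omega
    have e2 : n - 2 = (n - 4) + 2 := by omega
    have hle : lcs n (sLnr n r) (n - 3) ≤ W n (n - 2) := by
      rw [e3, e2]; exact lcs_le_W n r hn (n - 4)
    have e1 : n - 2 = (n - 3) + 1 := by omega
    rw [e1]
    show Submodule.span ℂ {w | ∃ x ∈ lcs n (sLnr n r) (n - 3), ∃ y, w = brkt n (sLnr n r) x y} = ⊥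
    rw [eq_bot_iff, Submodule.span_le]
    rintro w ⟨x, hx, y, rfl⟩
    have hc : brkt n (sLnr n r) x y = 0 :=
      brkt_central n r hn hrn2 x y (fun t ht => hle hx t ht (by omega))
    simp only [SetLike.mem_coe, Submodule.mem_bot]
    exact hc
end
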